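/- For 1 < r < R and f holomorphic on the annulus {1 < |w| < R} with Laurent expansion f(w) = a_0 + Σ_{n≥1} a_n(w^n + w^{-n}), if Re(f) > 0 on the annulus then for each n ≥ 1, |a_n|(r^n − r^{-n}) ≤ 2 Re(a_0). (The Cauchy integral on the circle |w| = r gives |a_n r^{-n} + \overline{a_n} r^n| ≤ (1/π)∫_0^{2π} Re(f(r e^{iθ})) dθ = 2 Re(a_0).) -/

import Mathlib

open Complex Real intervalIntegral

noncomputable def E (k : ℤ) (θ : ℝ) : ℂ := Complex.exp (k * θ * Complex.I)

lemma contE (k : ℤ) : Continuous (E k) := by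
  unfold E; continuity

lemma normE (k : ℤ) (θ : ℝ) : ‖E k θ‖ = 1 := by
  unfold E
  rw [Complex.norm_exp]
  simp

noncomputable def Fc (a : ℂ) (r : ℝ) (n m : ℕ) (θ : ℝ) : ℂ :=
  a * (r : ℂ) ^ m * E ((n : ℤ) + m) θ + a * (((r : ℂ) ^ m)⁻¹) * E ((n : ℤ) - m) θ
    + (starRingEnd ℂ) a * (r : ℂ) ^ m * E ((n : ℤ) - m) θ
    + (starRingEnd ℂ) a * (((r : ℂ) ^ m)⁻¹) * E ((n : ℤ) + m) θ

lemma contFc (a : ℂ) (r : ℝ) (n m : ℕ) : Continuous (Fc a r n m) := by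
  unfold Fc
  exact (((continuous_const.mul (contE _)).add (continuous_const.mul (contE _))).add
    (continuous_const.mul (contE _))).add (continuous_const.mul (contE _))

lemma normFc (a : ℂ) (r : ℝ) (hr : 1 ≤ r) (n m : ℕ) (θ : ℝ) :
    ‖Fc a r n m θ‖ ≤ 4 * ‖a‖ * r ^ m := by
  have hrm : (0:ℝ) < r ^ m := by positivity
  have hrm1 : (1:ℝ) ≤ r ^ m := one_le_pow₀ hr
  have hinv : (r ^ m)⁻¹ ≤ r ^ m := by
    calc (r ^ m)⁻¹ ≤ 1 := inv_le_one_of_one_le₀ hrm1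
    _ ≤ r ^ m := hrm1
  have hn : ∀ (c : ℂ) (s : ℝ) (k : ℤ), ‖c * (s : ℂ) * E k θ‖ = ‖c‖ * |s| := by
    intro c s k
    rw [norm_mul, norm_mul, normE, mul_one, Complex.norm_real, Real.norm_eq_abs]
  unfold Fc
  have h0 : |r ^ m| = r ^ m := abs_of_pos hrm
  have h0' : |(r ^ m)⁻¹| = (r ^ m)⁻¹ := abs_of_pos (by positivity)
  have hb : ∀ (c : ℂ) (s : ℝ) (k : ℤ), ‖c * (s:ℂ) * E k θ‖ ≤ ‖c‖ * |s| := fun c s k => (hn c s k).le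
  have hinvc : (((r:ℂ)) ^ m)⁻¹ = (((r ^ m)⁻¹ : ℝ) : ℂ) := by push_cast; ring
  have hc : ∀ z : ℂ, ‖(starRingEnd ℂ) z‖ = ‖z‖ := fun z => RCLike.norm_conj z
  calc ‖a * (r : ℂ) ^ m * E ((n : ℤ) + m) θ + a * (((r : ℂ) ^ m)⁻¹) * E ((n : ℤ) - m) θ
      + (starRingEnd ℂ) a * (r : ℂ) ^ m * E ((n : ℤ) - m) θ
      + (starRingEnd ℂ) a * (((r : ℂ) ^ m)⁻¹) * E ((n : ℤ) + m) θ‖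
      ≤ ‖a * (r : ℂ) ^ m * E ((n : ℤ) + m) θ + a * (((r : ℂ) ^ m)⁻¹) * E ((n : ℤ) - m) θ
      + (starRingEnd ℂ) a * (r : ℂ) ^ m * E ((n : ℤ) - m) θ‖
      + ‖(starRingEnd ℂ) a * (((r : ℂ) ^ m)⁻¹) * E ((n : ℤ) + m) θ‖ := norm_add_le _ _
    _ ≤ (‖a * (r : ℂ) ^ m * E ((n : ℤ) + m) θ + a * (((r : ℂ) ^ m)⁻¹) * E ((n : ℤ) - m) θ‖
      + ‖(starRingEnd ℂ) a * (r : ℂ) ^ m * E ((n : ℤ) - m) θ‖)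
      + ‖(starRingEnd ℂ) a * (((r : ℂ) ^ m)⁻¹) * E ((n : ℤ) + m) θ‖ := by
        gcongr; exact norm_add_le _ _
    _ ≤ ((‖a * (r : ℂ) ^ m * E ((n : ℤ) + m) θ‖ + ‖a * (((r : ℂ) ^ m)⁻¹) * E ((n : ℤ) - m) θ‖)
      + ‖(starRingEnd ℂ) a * (r : ℂ) ^ m * E ((n : ℤ) - m) θ‖)
      + ‖(starRingEnd ℂ) a * (((r : ℂ) ^ m)⁻¹) * E ((n : ℤ) + m) θ‖ := by
        gcongr; exact norm_add_le _ _
    _ ≤ 4 * ‖a‖ * r ^ m := by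
        have hpc : ((r:ℂ)) ^ m = ((r ^ m : ℝ) : ℂ) := by push_cast; ring
        rw [hinvc, hpc]
        rw [hn a (r^m), hn a ((r^m)⁻¹), hn _ (r^m), hn _ ((r^m)⁻¹), hc, h0, h0']
        nlinarith [norm_nonneg a, hinv, hrm]

lemma intE (k : ℤ) : (∫ θ in (0:ℝ)..(2*π), Complex.exp (k * θ * Complex.I))
    = if k = 0 then (2*π : ℂ) else 0 := by
  rcases eq_or_ne k 0 with hk | hk
  · simp [hk]
  · rw [if_neg hk]
    have h : ∀ θ : ℝ, (k : ℂ) * θ * Complex.I = (k * Complex.I) * θ := by intro θ; ring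
    simp_rw [h]
    rw [integral_exp_mul_complex (by simp [Complex.I_ne_zero, hk] : (k:ℂ) * Complex.I ≠ 0)]
    have : (k : ℂ) * Complex.I * (2*π : ℝ) = k * (2 * π * Complex.I) := by push_cast; ring
    rw [this, Complex.exp_int_mul_two_pi_mul_I]
    simp

lemma intcE (c : ℂ) (k : ℤ) : (∫ θ in (0:ℝ)..(2*π), c * E k θ)
    = if k = 0 then (2*π : ℂ) * c else 0 := by
  unfold E
  rw [intervalIntegral.integral_const_mul, intE]
  split <;> ring

lemma intFc (a : ℂ) (r : ℝ) (n m : ℕ) (hm : 1 ≤ m) :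
    (∫ θ in (0:ℝ)..(2*π), Fc a r n m θ)
      = if (n : ℤ) = m then (2*π : ℂ) * (a * (((r:ℂ) ^ m)⁻¹) + (starRingEnd ℂ) a * (r:ℂ) ^ m)
        else 0 := by
  have hI : ∀ (c : ℂ) (k : ℤ), IntervalIntegrable (fun θ => c * E k θ) MeasureTheory.volume 0 (2*π) :=
    fun c k => (Continuous.intervalIntegrable (continuous_const.mul (contE k)) _ _)
  unfold Fc
  rw [intervalIntegral.integral_add (((hI _ _).add (hI _ _)).add (hI _ _)) (hI _ _),
    intervalIntegral.integral_add ((hI _ _).add (hI _ _)) (hI _ _),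
    intervalIntegral.integral_add (hI _ _) (hI _ _)]
  have hmul : ∀ (c : ℂ) (s : ℂ) (k : ℤ), (fun θ => c * s * E k θ) = fun θ => (c * s) * E k θ := by
    intros; rfl
  rw [intcE, intcE, intcE, intcE]
  have hne : ((n : ℤ) + m) ≠ 0 := by omega
  have hiff : ((n:ℤ) - m = 0) = ((n:ℤ) = m) := by simp [sub_eq_zero]
  rw [if_neg hne, if_neg hne]
  simp only [hiff]
  by_cases h : (n : ℤ) = m
  · rw [if_pos h, if_pos h, if_pos h]; ring
  · rw [if_neg h, if_neg h, if_neg h]; ring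

lemma E_mul_exp (k : ℤ) (m : ℕ) (θ : ℝ) :
    E k θ * Complex.exp (m * θ * Complex.I) = E (k + m) θ := by
  rw [E, E, ← Complex.exp_add]
  push_cast
  ring_nf

lemma E_mul_exp_neg (k : ℤ) (m : ℕ) (θ : ℝ) :
    E k θ * Complex.exp (-(m * θ * Complex.I)) = E (k - m) θ := by
  rw [E, E, ← Complex.exp_add]
  push_cast
  ring_nf

lemma term_eq (r θ : ℝ) (hr : 0 < r) (a : ℂ) (n : ℕ) (m : ℕ) :
    E n θ * (a * (((r : ℂ) * Complex.exp (θ * Complex.I)) ^ m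
        + (((r : ℂ) * Complex.exp (θ * Complex.I))⁻¹) ^ m)
      + (starRingEnd ℂ) (a * (((r : ℂ) * Complex.exp (θ * Complex.I)) ^ m
        + (((r : ℂ) * Complex.exp (θ * Complex.I))⁻¹) ^ m)))
    = a * (r : ℂ) ^ m * E ((n : ℤ) + m) θ + a * (((r : ℂ) ^ m)⁻¹) * E ((n : ℤ) - m) θ
      + (starRingEnd ℂ) a * (r : ℂ) ^ m * E ((n : ℤ) - m) θ
      + (starRingEnd ℂ) a * (((r : ℂ) ^ m)⁻¹) * E ((n : ℤ) + m) θ := by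
  have hr0 : (r : ℂ) ≠ 0 := by exact_mod_cast hr.ne'
  have h1 : ((r : ℂ) * Complex.exp (θ * Complex.I)) ^ m
      = (r : ℂ) ^ m * Complex.exp (m * θ * Complex.I) := by
    rw [mul_pow, ← Complex.exp_nat_mul]; ring_nf
  have h2 : (((r : ℂ) * Complex.exp (θ * Complex.I))⁻¹) ^ m
      = ((r : ℂ) ^ m)⁻¹ * Complex.exp (-(m * θ * Complex.I)) := by
    rw [mul_inv, ← Complex.exp_neg, mul_pow, ← Complex.exp_nat_mul, inv_pow]; ring_nf
  have hconj : (starRingEnd ℂ) (Complex.exp (m * θ * Complex.I))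
      = Complex.exp (-(m * θ * Complex.I)) := by
    rw [← Complex.exp_conj]; congr 1
    simp [Complex.conj_I]
  have hconj2 : (starRingEnd ℂ) (Complex.exp (-(m * θ * Complex.I)))
      = Complex.exp (m * θ * Complex.I) := by
    rw [← Complex.exp_conj]; congr 1
    simp [Complex.conj_I]
  simp only [h1, h2, map_add, map_mul, map_inv₀, map_pow, Complex.conj_ofReal, hconj, hconj2]
  rw [← E_mul_exp n m θ, ← E_mul_exp_neg n m θ]
  ring

lemma hasSum_pt (R r : ℝ) (hr : 1 < r) (hrR : r < R) (a : ℕ → ℂ) (f : ℂ → ℂ)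
    (hf : ∀ w : ℂ, 1 < ‖w‖ → ‖w‖ < R →
      HasSum (fun n : ℕ => a (n + 1) * (w ^ (n + 1) + (w⁻¹) ^ (n + 1))) (f w - a 0))
    (n : ℕ) (θ : ℝ) :
    HasSum (fun j => Fc (a (j+1)) r n (j+1) θ)
      (E n θ * (f ((r:ℂ) * Complex.exp (θ * Complex.I))
        + (starRingEnd ℂ) (f ((r:ℂ) * Complex.exp (θ * Complex.I))) - a 0
        - (starRingEnd ℂ) (a 0))) := by
  set w : ℂ := (r:ℂ) * Complex.exp (θ * Complex.I) with hw
  have habs : ‖w‖ = r := by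
    rw [hw, norm_mul, Complex.norm_real, Complex.norm_exp_ofReal_mul_I, mul_one, Real.norm_eq_abs,
      abs_of_pos (by linarith)]
  have hs := hf w (by rw [habs]; exact hr) (by rw [habs]; exact hrR)
  have hc : HasSum (fun j : ℕ => (starRingEnd ℂ) (a (j+1) * (w ^ (j+1) + (w⁻¹) ^ (j+1))))
      ((starRingEnd ℂ) (f w - a 0)) := hs.map (starRingEnd ℂ) continuous_conj
  have hadd := (hs.add hc).mul_left (E n θ)
  have hfun : (fun j : ℕ => E n θ * (a (j+1) * (w ^ (j+1) + (w⁻¹) ^ (j+1))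
      + (starRingEnd ℂ) (a (j+1) * (w ^ (j+1) + (w⁻¹) ^ (j+1)))))
      = fun j => Fc (a (j+1)) r n (j+1) θ := by
    funext j
    rw [hw]
    rw [term_eq r θ (by linarith) (a (j+1)) n (j+1)]
    rfl
  rw [hfun] at hadd
  have e : E n θ * (f w + (starRingEnd ℂ) (f w) - a 0 - (starRingEnd ℂ) (a 0))
      = E n θ * (f w - a 0 + (starRingEnd ℂ) (f w - a 0)) := by
    rw [map_sub]
    ring
  rw [e]
  exact hadd

lemma summable_aux (R r : ℝ) (hr : 1 < r) (hrR : r < R) (a : ℕ → ℂ) (f : ℂ → ℂ)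
    (hf : ∀ w : ℂ, 1 < ‖w‖ → ‖w‖ < R →
      HasSum (fun n : ℕ => a (n + 1) * (w ^ (n + 1) + (w⁻¹) ^ (n + 1))) (f w - a 0)) :
    Summable (fun j : ℕ => ‖a (j+1)‖ * r ^ (j+1)) := by
  set r' : ℝ := (r + R) / 2 with hr'
  have h1 : 1 < r' := by rw [hr']; linarith
  have h2 : r' < R := by rw [hr']; linarith
  have h3 : r < r' := by rw [hr']; linarith
  have habs : ‖(r' : ℂ)‖ = r' := by
    rw [Complex.norm_real, Real.norm_eq_abs, abs_of_pos (by linarith)]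
  have hs := hf (r' : ℂ) (by rw [habs]; exact h1) (by rw [habs]; exact h2)
  have hsum : Summable (fun j : ℕ => ‖a (j+1) * (((r':ℂ)) ^ (j+1) + (((r':ℂ))⁻¹) ^ (j+1))‖) :=
    summable_norm_iff.mpr hs.summable
  apply hsum.of_nonneg_of_le
  · intro j; positivity
  · intro j
    rw [norm_mul]
    have e1 : ((r':ℂ)) ^ (j+1) + (((r':ℂ))⁻¹) ^ (j+1) = ((r' ^ (j+1) + (r'⁻¹) ^ (j+1) : ℝ) : ℂ) := by
      push_cast; ring
    rw [e1, Complex.norm_real, Real.norm_eq_abs,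
      abs_of_pos (by positivity)]
    have hle : r ^ (j+1) ≤ r' ^ (j+1) + (r'⁻¹) ^ (j+1) := by
      have : r ^ (j+1) ≤ r' ^ (j+1) := pow_le_pow_left₀ (by linarith) h3.le _
      nlinarith [pow_pos (show (0:ℝ) < r'⁻¹ by positivity) (j+1)]
    exact mul_le_mul_of_nonneg_left hle (norm_nonneg _)

lemma E_zero (θ : ℝ) : E 0 θ = 1 := by unfold E; simp

lemma key (R r : ℝ) (hr : 1 < r) (hrR : r < R) (a : ℕ → ℂ) (f : ℂ → ℂ)
    (hf : ∀ w : ℂ, 1 < ‖w‖ → ‖w‖ < R →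
      HasSum (fun n : ℕ => a (n + 1) * (w ^ (n + 1) + (w⁻¹) ^ (n + 1))) (f w - a 0))
    (n : ℕ) :
    HasSum (fun j : ℕ => if (n : ℤ) = ((j : ℤ) + 1) then
        (2*π : ℂ) * (a (j+1) * (((r:ℂ) ^ (j+1))⁻¹) + (starRingEnd ℂ) (a (j+1)) * (r:ℂ) ^ (j+1))
      else 0)
      (∫ θ in (0:ℝ)..(2*π), E n θ * (f ((r:ℂ) * Complex.exp (θ * Complex.I))
        + (starRingEnd ℂ) (f ((r:ℂ) * Complex.exp (θ * Complex.I))) - a 0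
        - (starRingEnd ℂ) (a 0))) := by
  have H := intervalIntegral.hasSum_integral_of_dominated_convergence
    (F := fun j θ => Fc (a (j+1)) r n (j+1) θ)
    (μ := MeasureTheory.volume) (a := 0) (b := 2*π)
    (f := fun θ => E n θ * (f ((r:ℂ) * Complex.exp (θ * Complex.I))
        + (starRingEnd ℂ) (f ((r:ℂ) * Complex.exp (θ * Complex.I))) - a 0
        - (starRingEnd ℂ) (a 0)))
    (bound := fun j _ => 4 * ‖a (j+1)‖ * r ^ (j+1))
    (fun j => (contFc _ _ _ _).aestronglyMeasurable)
    (fun j => MeasureTheory.ae_of_all _ fun θ _ => normFc _ _ hr.le _ _ _)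
    (MeasureTheory.ae_of_all _ fun θ _ => by
      have := (summable_aux R r hr hrR a f hf).mul_left 4
      simpa [mul_assoc] using this)
    intervalIntegrable_const
    (MeasureTheory.ae_of_all _ fun θ _ => hasSum_pt R r hr hrR a f hf n θ)
  have heq : (fun j : ℕ => ∫ θ in (0:ℝ)..(2*π), Fc (a (j+1)) r n (j+1) θ)
      = fun j : ℕ => if (n : ℤ) = ((j : ℤ) + 1) then
        (2*π : ℂ) * (a (j+1) * (((r:ℂ) ^ (j+1))⁻¹) + (starRingEnd ℂ) (a (j+1)) * (r:ℂ) ^ (j+1))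
      else 0 := by
    funext j
    rw [intFc (a (j+1)) r n (j+1) (by omega)]
    norm_cast
  rwa [heq] at H


/-- For `1 < r < R` and `f(w) = a₀ + Σ_{n≥1} aₙ (wⁿ + w⁻ⁿ)` holomorphic on {1 < |w| < R}
with `Re f > 0`, one has `|aₙ| (rⁿ - r⁻ⁿ) ≤ 2 Re a₀` for each n ≥ 1. -/
theorem coeff_bound_circle (R r : ℝ) (hr : 1 < r) (hrR : r < R) (a : ℕ → ℂ) (f : ℂ → ℂ)
    (hf : ∀ w : ℂ, 1 < ‖w‖ → ‖w‖ < R →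
      HasSum (fun n : ℕ => a (n + 1) * (w ^ (n + 1) + (w⁻¹) ^ (n + 1))) (f w - a 0))
    (hre : ∀ w : ℂ, 1 < ‖w‖ → ‖w‖ < R → 0 < (f w).re) :
    ∀ n : ℕ, 1 ≤ n → ‖a n‖ * (r ^ n - (r ^ n)⁻¹) ≤ 2 * (a 0).re := by
  
  intro n hn
  have hπ : (0:ℝ) < π := Real.pi_pos
  have habs : ∀ θ : ℝ, ‖(r:ℂ) * Complex.exp (θ * Complex.I)‖ = r := fun θ => by
    rw [norm_mul, Complex.norm_real, Complex.norm_exp_ofReal_mul_I, mul_one, Real.norm_eq_abs,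
      abs_of_pos (by linarith)]
  have hupos : ∀ θ : ℝ, 0 < (f ((r:ℂ) * Complex.exp (θ * Complex.I))).re := fun θ =>
    hre _ (by rw [habs]; exact hr) (by rw [habs]; exact hrR)
  have hofR : ∀ θ : ℝ, f ((r:ℂ) * Complex.exp (θ * Complex.I))
      + (starRingEnd ℂ) (f ((r:ℂ) * Complex.exp (θ * Complex.I)))
      = ((2 * (f ((r:ℂ) * Complex.exp (θ * Complex.I))).re : ℝ) : ℂ) := fun θ =>
    Complex.add_conj _
  have hB := summable_aux R r hr hrR a f hf
  -- continuity of g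
  have hcont : Continuous (fun θ : ℝ => f ((r:ℂ) * Complex.exp (θ * Complex.I))
      + (starRingEnd ℂ) (f ((r:ℂ) * Complex.exp (θ * Complex.I)))) := by
    have ht : (fun θ : ℝ => f ((r:ℂ) * Complex.exp (θ * Complex.I))
        + (starRingEnd ℂ) (f ((r:ℂ) * Complex.exp (θ * Complex.I))))
        = fun θ => (a 0 + (starRingEnd ℂ) (a 0)) + ∑' j, Fc (a (j+1)) r 0 (j+1) θ := by
      funext θ
      have hp := hasSum_pt R r hr hrR a f hf 0 θ
      simp only [Nat.cast_zero, E_zero, one_mul] at hp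
      rw [hp.tsum_eq]; ring
    rw [ht]
    exact continuous_const.add (continuous_tsum (fun j => contFc _ _ _ _)
      (hB.mul_left 4 |>.congr fun j => by ring)
      (fun j θ => normFc _ _ hr.le _ _ _))
  have hint : IntervalIntegrable (fun θ : ℝ => f ((r:ℂ) * Complex.exp (θ * Complex.I))
      + (starRingEnd ℂ) (f ((r:ℂ) * Complex.exp (θ * Complex.I)))) MeasureTheory.volume 0 (2*π) :=
    hcont.intervalIntegrable _ _
  -- Step 1 : ∫ g = 2π • c0
  have H0 := key R r hr hrR a f hf 0
  rw [show (fun j : ℕ => if ((0:ℕ) : ℤ) = ((j : ℤ) + 1) then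
      (2*π : ℂ) * (a (j+1) * (((r:ℂ) ^ (j+1))⁻¹) + (starRingEnd ℂ) (a (j+1)) * (r:ℂ) ^ (j+1))
      else 0) = fun _ => (0:ℂ) from funext fun j => if_neg (by omega)] at H0
  have hint0 := hasSum_zero.unique H0
  rw [show (fun θ : ℝ => E ((0:ℕ) : ℤ) θ * (f ((r:ℂ) * Complex.exp (θ * Complex.I))
        + (starRingEnd ℂ) (f ((r:ℂ) * Complex.exp (θ * Complex.I))) - a 0
        - (starRingEnd ℂ) (a 0)))
      = fun θ : ℝ => (f ((r:ℂ) * Complex.exp (θ * Complex.I))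
        + (starRingEnd ℂ) (f ((r:ℂ) * Complex.exp (θ * Complex.I))))
        - (a 0 + (starRingEnd ℂ) (a 0)) from funext fun θ => by
      simp only [Nat.cast_zero, E_zero, one_mul]; ring] at hint0
  rw [intervalIntegral.integral_sub hint intervalIntegrable_const,
    intervalIntegral.integral_const] at hint0
  have hg_int : (∫ θ in (0:ℝ)..(2*π), (f ((r:ℂ) * Complex.exp (θ * Complex.I))
      + (starRingEnd ℂ) (f ((r:ℂ) * Complex.exp (θ * Complex.I)))))
      = ((2*π : ℝ) : ℂ) * (a 0 + (starRingEnd ℂ) (a 0)) := by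
    have := sub_eq_zero.mp hint0.symm
    rw [this, sub_zero, Complex.real_smul]
  -- the real integral
  have hreal : (∫ θ in (0:ℝ)..(2*π), 2 * (f ((r:ℂ) * Complex.exp (θ * Complex.I))).re)
      = 2*π * (2 * (a 0).re) := by
    have h1 : (∫ θ in (0:ℝ)..(2*π), (f ((r:ℂ) * Complex.exp (θ * Complex.I))
        + (starRingEnd ℂ) (f ((r:ℂ) * Complex.exp (θ * Complex.I)))))
        = ((∫ θ in (0:ℝ)..(2*π), 2 * (f ((r:ℂ) * Complex.exp (θ * Complex.I))).re : ℝ) : ℂ) := by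
      rw [← intervalIntegral.integral_ofReal]
      exact intervalIntegral.integral_congr fun θ _ => hofR θ
    rw [h1] at hg_int
    have h2 : ((2*π : ℝ) : ℂ) * (a 0 + (starRingEnd ℂ) (a 0))
        = ((2*π * (2 * (a 0).re) : ℝ) : ℂ) := by
      rw [Complex.add_conj]; push_cast; ring
    rw [h2] at hg_int
    exact_mod_cast hg_int
  -- Step 2 : ∫ E n * g = C
  set C : ℂ := (2*π : ℂ) * (a n * (((r:ℂ) ^ n)⁻¹) + (starRingEnd ℂ) (a n) * (r:ℂ) ^ n) with hC
  have H1 := key R r hr hrR a f hf n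
  rw [show (fun j : ℕ => if (n : ℤ) = ((j : ℤ) + 1) then
      (2*π : ℂ) * (a (j+1) * (((r:ℂ) ^ (j+1))⁻¹) + (starRingEnd ℂ) (a (j+1)) * (r:ℂ) ^ (j+1))
      else 0) = fun j : ℕ => if j = n - 1 then C else 0 from funext fun j => by
    by_cases hj : j = n - 1
    · subst hj
      rw [if_pos (by omega), if_pos rfl, hC]
      have e : n - 1 + 1 = n := by omega
      rw [e]
    · rw [if_neg (by omega), if_neg hj]] at H1
  have hintn := (hasSum_ite_eq (n-1) C).unique H1
  rw [show (fun θ : ℝ => E (n : ℤ) θ * (f ((r:ℂ) * Complex.exp (θ * Complex.I))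
        + (starRingEnd ℂ) (f ((r:ℂ) * Complex.exp (θ * Complex.I))) - a 0
        - (starRingEnd ℂ) (a 0)))
      = fun θ : ℝ => E (n : ℤ) θ * (f ((r:ℂ) * Complex.exp (θ * Complex.I))
        + (starRingEnd ℂ) (f ((r:ℂ) * Complex.exp (θ * Complex.I))))
        - (a 0 + (starRingEnd ℂ) (a 0)) * E (n : ℤ) θ from funext fun θ => by ring] at hintn
  have h1i : IntervalIntegrable (fun θ : ℝ => E (n : ℤ) θ * (f ((r:ℂ) * Complex.exp (θ * Complex.I))
      + (starRingEnd ℂ) (f ((r:ℂ) * Complex.exp (θ * Complex.I))))) MeasureTheory.volume 0 (2*π) :=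
    Continuous.intervalIntegrable (by exact (contE _).mul hcont) _ _
  have h2i : IntervalIntegrable (fun θ : ℝ => (a 0 + (starRingEnd ℂ) (a 0)) * E (n : ℤ) θ)
      MeasureTheory.volume 0 (2*π) :=
    Continuous.intervalIntegrable (by exact continuous_const.mul (contE _)) _ _
  rw [intervalIntegral.integral_sub h1i h2i,
    intcE, if_neg (by omega : ((n:ℕ) : ℤ) ≠ 0), sub_zero] at hintn
  -- Step 3 : norm bound
  have hnorm : ‖C‖ ≤ 2*π * (2 * (a 0).re) := by
    rw [hintn]
    calc ‖∫ θ in (0:ℝ)..(2*π), E (n : ℤ) θ * (f ((r:ℂ) * Complex.exp (θ * Complex.I))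
          + (starRingEnd ℂ) (f ((r:ℂ) * Complex.exp (θ * Complex.I))))‖
        ≤ ∫ θ in (0:ℝ)..(2*π), ‖E (n : ℤ) θ * (f ((r:ℂ) * Complex.exp (θ * Complex.I))
          + (starRingEnd ℂ) (f ((r:ℂ) * Complex.exp (θ * Complex.I))))‖ :=
          intervalIntegral.norm_integral_le_integral_norm (by linarith)
      _ = ∫ θ in (0:ℝ)..(2*π), 2 * (f ((r:ℂ) * Complex.exp (θ * Complex.I))).re := by
          apply intervalIntegral.integral_congr
          intro θ _
          simp only [norm_mul, normE, one_mul, hofR θ, Complex.norm_real, Real.norm_eq_abs]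
          rw [abs_of_pos (hupos θ)]
          norm_num
      _ = 2*π * (2 * (a 0).re) := hreal
  -- Step 4 : conclude
  have hCnorm : ‖C‖ = 2*π * ‖a n * (((r:ℂ) ^ n)⁻¹) + (starRingEnd ℂ) (a n) * (r:ℂ) ^ n‖ := by
    rw [hC, norm_mul]
    congr 1
    have : (2*(π:ℂ)) = ((2*π : ℝ) : ℂ) := by push_cast; ring
    rw [this, Complex.norm_real, Real.norm_eq_abs, abs_of_pos (by linarith)]
  have hS : ‖a n * (((r:ℂ) ^ n)⁻¹) + (starRingEnd ℂ) (a n) * (r:ℂ) ^ n‖ ≤ 2 * (a 0).re := by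
    rw [hCnorm] at hnorm
    nlinarith [norm_nonneg (a n * (((r:ℂ) ^ n)⁻¹) + (starRingEnd ℂ) (a n) * (r:ℂ) ^ n)]
  have hrn : (0:ℝ) < r ^ n := by positivity
  have hrc : ‖((r:ℂ)) ^ n‖ = r ^ n := by
    rw [norm_pow, Complex.norm_real, Real.norm_eq_abs, abs_of_pos (by linarith)]
  have hy : ‖(starRingEnd ℂ) (a n) * (r:ℂ) ^ n‖ = ‖a n‖ * r ^ n := by
    rw [norm_mul, RCLike.norm_conj, hrc]
  have hx : ‖a n * (((r:ℂ) ^ n)⁻¹)‖ = ‖a n‖ * (r ^ n)⁻¹ := by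
    rw [norm_mul, norm_inv, hrc]
  have htri : ‖(starRingEnd ℂ) (a n) * (r:ℂ) ^ n‖
      ≤ ‖a n * (((r:ℂ) ^ n)⁻¹) + (starRingEnd ℂ) (a n) * (r:ℂ) ^ n‖
        + ‖a n * (((r:ℂ) ^ n)⁻¹)‖ := by
    have := norm_sub_le (a n * (((r:ℂ) ^ n)⁻¹) + (starRingEnd ℂ) (a n) * (r:ℂ) ^ n)
      (a n * (((r:ℂ) ^ n)⁻¹))
    simpa using this
  rw [hy, hx] at htri
  nlinarith [hS, htri]
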